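/- Let r ≥ 4 be an even integer and let M be the binary matroid represented by the r × 2r matrix [I_r | J_r - I_r] over GF(2), where I_r is the identity and J_r the all-ones matrix. Let B₁ be the set of columns of I_r and B₂ the set of columns of J_r - I_r. Then B₁ and B₂ are bases of M, but there do not exist 3-element subsets X ⊆ B₁, Y ⊆ B₂ and a bijection φ: X → Y such that (B₁ \ Z) ∪ φ(Z) is a basis of M for every Z ⊆ X. -/

import Mathlib

/-- The matrix `[I_r | J_r - I_r]` over `GF(2)`, with columns indexed by `Fin r ⊕ Fin r`. -/
def spikeMatrix (r : ℕ) : Matrix (Fin r) (Fin r ⊕ Fin r) (ZMod 2) :=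
  Matrix.of fun i j =>
    Sum.elim (fun j' => if i = j' then 1 else 0) (fun j' => if i = j' then 0 else 1) j

/-- A set of columns is a basis of the column matroid of `[I_r | J_r - I_r]`:
it has `r` elements and the corresponding columns are linearly independent. -/
def spikeIsBasis (r : ℕ) (S : Finset (Fin r ⊕ Fin r)) : Prop :=
  S.card = r ∧
    LinearIndependent (ZMod 2) (fun j : S => Matrix.transpose (spikeMatrix r) (j : Fin r ⊕ Fin r))

open Finset Matrix

lemma spike_inl (r : ℕ) (x : Fin r) (i : Fin r) :
    (spikeMatrix r)ᵀ (Sum.inl x) i = if i = x then (1 : ZMod 2) else 0 := rfl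

lemma spike_inr (r : ℕ) (x : Fin r) (i : Fin r) :
    (spikeMatrix r)ᵀ (Sum.inr x) i = if i = x then (0 : ZMod 2) else 1 := rfl

lemma spike_not_li (r : ℕ) (U E : Finset (Fin r ⊕ Fin r)) (hEU : E ⊆ U)
    (hE : E.Nonempty) (hsum : ∑ j ∈ E, (spikeMatrix r)ᵀ j = 0) :
    ¬ LinearIndependent (ZMod 2)
      (fun j : U => (spikeMatrix r)ᵀ (j : Fin r ⊕ Fin r)) := by
  intro h
  rw [Fintype.linearIndependent_iff] at h
  obtain ⟨j₀, hj₀⟩ := hE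
  have h0 := h (fun j => if (j : Fin r ⊕ Fin r) ∈ E then 1 else 0) ?_ ⟨j₀, hEU hj₀⟩
  · simp [hj₀] at h0
  · calc ∑ j : U, (if (j : Fin r ⊕ Fin r) ∈ E then (1 : ZMod 2) else 0) •
          (spikeMatrix r)ᵀ (j : Fin r ⊕ Fin r)
        = ∑ j ∈ U, (if j ∈ E then (1 : ZMod 2) else 0) • (spikeMatrix r)ᵀ j :=
          Finset.sum_coe_sort U (fun j => (if j ∈ E then (1 : ZMod 2) else 0) • (spikeMatrix r)ᵀ j)
      _ = ∑ j ∈ E, (spikeMatrix r)ᵀ j := by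
          simp only [ite_smul, one_smul, zero_smul, Finset.sum_ite_mem,
            Finset.inter_eq_right.mpr hEU]
          erw [Finset.sum_ite_mem, Finset.inter_eq_right.mpr hEU]
      _ = 0 := hsum

lemma li_B1 (r : ℕ) :
    LinearIndependent (ZMod 2)
      (fun j : (univ.map ⟨Sum.inl, Sum.inl_injective⟩ : Finset (Fin r ⊕ Fin r)) =>
        (spikeMatrix r)ᵀ (j : Fin r ⊕ Fin r)) := by
  have hg : Function.Bijective (fun x : Fin r =>
      (⟨Sum.inl x, by simp⟩ :
        (univ.map ⟨Sum.inl, Sum.inl_injective⟩ : Finset (Fin r ⊕ Fin r)))) := by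
    constructor
    · intro a b hab
      simpa using hab
    · rintro ⟨j, hj⟩
      simp only [Finset.mem_map, Finset.mem_univ, Function.Embedding.coeFn_mk,
        true_and] at hj
      obtain ⟨x, hx⟩ := hj
      exact ⟨x, by simp [hx]⟩
  rw [← linearIndependent_equiv (Equiv.ofBijective _ hg)]
  rw [Fintype.linearIndependent_iff]
  intro g hg0 x
  have := congrFun hg0 x
  simpa [Function.comp, Equiv.ofBijective_apply, spikeMatrix, Finset.sum_apply,
    mul_ite, Finset.sum_ite_eq] using this

lemma li_B2 (r : ℕ) (hre : Even r) :
    LinearIndependent (ZMod 2)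
      (fun j : (univ.map ⟨Sum.inr, Sum.inr_injective⟩ : Finset (Fin r ⊕ Fin r)) =>
        (spikeMatrix r)ᵀ (j : Fin r ⊕ Fin r)) := by
  have hg : Function.Bijective (fun x : Fin r =>
      (⟨Sum.inr x, by simp⟩ :
        (univ.map ⟨Sum.inr, Sum.inr_injective⟩ : Finset (Fin r ⊕ Fin r)))) := by
    constructor
    · intro a b hab
      simpa using hab
    · rintro ⟨j, hj⟩
      simp only [Finset.mem_map, Finset.mem_univ, Function.Embedding.coeFn_mk,
        true_and] at hj
      obtain ⟨x, hx⟩ := hj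
      exact ⟨x, by simp [hx]⟩
  rw [← linearIndependent_equiv (Equiv.ofBijective _ hg)]
  rw [Fintype.linearIndependent_iff]
  intro g hg0 x
  have key : ∀ y : Fin r, g y = ∑ z : Fin r, g z := by
    intro y
    have h1 := congrFun hg0 y
    simp only [Function.comp, Equiv.ofBijective_apply, Finset.sum_apply,
      Pi.smul_apply, spike_inr, smul_eq_mul, mul_ite, mul_zero, mul_one,
      Pi.zero_apply] at h1
    have h2 : ∀ z : Fin r, (if y = z then (0:ZMod 2) else g z)
        = g z - (if y = z then g z else 0) := by
      intro z; split_ifs <;> simp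
    rw [Finset.sum_congr rfl (fun z _ => h2 z), Finset.sum_sub_distrib,
      Finset.sum_ite_eq] at h1
    simp at h1
    linear_combination -h1
  have hC : (∑ z : Fin r, g z) = 0 := by
    have h1 : ∑ z : Fin r, g z = ∑ _z : Fin r, ∑ z : Fin r, g z :=
      Finset.sum_congr rfl fun z _ => key z
    rw [Finset.sum_const, Finset.card_univ, Fintype.card_fin, nsmul_eq_mul,
      (ZMod.natCast_eq_zero_iff r 2).mpr hre.two_dvd, zero_mul] at h1
    exact h1
  rw [key x, hC]

lemma sum_B1 (r : ℕ) :
    ∑ j ∈ (univ.map ⟨Sum.inl, Sum.inl_injective⟩ : Finset (Fin r ⊕ Fin r)),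
      (spikeMatrix r)ᵀ j = fun _ => (1 : ZMod 2) := by
  erw [Finset.sum_map]
  funext i
  simp [spikeMatrix, Finset.sum_apply, Finset.sum_ite_eq]

lemma sum_single (r : ℕ) (s : Fin r) :
    ∑ j ∈ ((univ.map ⟨Sum.inl, Sum.inl_injective⟩ : Finset (Fin r ⊕ Fin r))
        \ {Sum.inl s} ∪ {Sum.inr s}), (spikeMatrix r)ᵀ j = 0 := by
  erw [Finset.sum_union (by simp), Finset.sum_sdiff_eq_sub (by simp), sum_B1]
  funext i
  erw [Finset.sum_singleton, Finset.sum_singleton]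
  simp only [Finset.sum_singleton, Pi.add_apply, Pi.sub_apply, Pi.zero_apply,
    spike_inl, spike_inr]
  split_ifs <;> rfl

lemma sum_pair (r : ℕ) (t t' : Fin r) (htt : t ≠ t') :
    ∑ j ∈ ({Sum.inl t, Sum.inl t', Sum.inr t, Sum.inr t'} :
        Finset (Fin r ⊕ Fin r)), (spikeMatrix r)ᵀ j = 0 := by
  erw [Finset.sum_insert (by simp [htt]), Finset.sum_insert (by simp),
    Finset.sum_insert (by simp [htt]), Finset.sum_singleton]
  funext i
  simp only [Pi.add_apply, Pi.zero_apply, spike_inl, spike_inr]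
  split_ifs <;> rfl

lemma sum_full (r : ℕ) (s₁ s₂ s₃ t₁ t₂ t₃ : Fin r)
    (hs12 : s₁ ≠ s₂) (hs13 : s₁ ≠ s₃) (hs23 : s₂ ≠ s₃)
    (ht12 : t₁ ≠ t₂) (ht13 : t₁ ≠ t₃) (ht23 : t₂ ≠ t₃)
    (teq : ({t₁, t₂, t₃} : Finset (Fin r)) = {s₁, s₂, s₃}) :
    ∑ j ∈ ((univ.map ⟨Sum.inl, Sum.inl_injective⟩ : Finset (Fin r ⊕ Fin r))
        \ {Sum.inl s₁, Sum.inl s₂, Sum.inl s₃}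
        ∪ {Sum.inr t₁, Sum.inr t₂, Sum.inr t₃}), (spikeMatrix r)ᵀ j = 0 := by
  have hdisj : Disjoint
      ((univ.map ⟨Sum.inl, Sum.inl_injective⟩ : Finset (Fin r ⊕ Fin r))
        \ {Sum.inl s₁, Sum.inl s₂, Sum.inl s₃})
      ({Sum.inr t₁, Sum.inr t₂, Sum.inr t₃} : Finset (Fin r ⊕ Fin r)) := by
    rw [Finset.disjoint_left]
    intro j hj hj'
    rcases Finset.mem_sdiff.mp hj with ⟨hj1, -⟩
    simp only [Finset.mem_map, Finset.mem_univ, Function.Embedding.coeFn_mk,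
      true_and] at hj1
    obtain ⟨x, rfl⟩ := hj1
    simp at hj'
  have hsub : ({Sum.inl s₁, Sum.inl s₂, Sum.inl s₃} : Finset (Fin r ⊕ Fin r))
      ⊆ univ.map ⟨Sum.inl, Sum.inl_injective⟩ := by
    intro j hj
    simp only [Finset.mem_insert, Finset.mem_singleton] at hj
    rcases hj with rfl | rfl | rfl <;> simp
  erw [Finset.sum_union hdisj, Finset.sum_sdiff_eq_sub hsub, sum_B1]
  have himl : ({Sum.inl s₁, Sum.inl s₂, Sum.inl s₃} : Finset (Fin r ⊕ Fin r))
      = Finset.image Sum.inl {s₁, s₂, s₃} := by simp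
  have himr : ({Sum.inr t₁, Sum.inr t₂, Sum.inr t₃} : Finset (Fin r ⊕ Fin r))
      = Finset.image Sum.inr {t₁, t₂, t₃} := by simp
  erw [himl, himr, Finset.sum_image (by simp), Finset.sum_image (by simp), teq]
  funext i
  simp only [Pi.add_apply, Pi.sub_apply, Pi.zero_apply, Finset.sum_apply,
    spike_inl, spike_inr]
  rw [Finset.sum_insert (by simp [hs12, hs13]), Finset.sum_insert (by simp [hs23]),
    Finset.sum_singleton, Finset.sum_insert (by simp [hs12, hs13]),
    Finset.sum_insert (by simp [hs23]), Finset.sum_singleton]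
  split_ifs <;> rfl

lemma cyc {α : Type*} [DecidableEq α] (s₁ s₂ s₃ t₁ t₂ t₃ : α)
    (hs12 : s₁ ≠ s₂) (hs13 : s₁ ≠ s₃) (hs23 : s₂ ≠ s₃)
    (ht12 : t₁ ≠ t₂) (ht13 : t₁ ≠ t₃) (ht23 : t₂ ≠ t₃)
    (h1 : t₁ ≠ s₁) (h2 : t₂ ≠ s₂) (h3 : t₃ ≠ s₃)
    (p12 : t₁ = s₂ ∨ t₂ = s₁) (p13 : t₁ = s₃ ∨ t₃ = s₁)
    (p23 : t₂ = s₃ ∨ t₃ = s₂) :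
    ({t₁, t₂, t₃} : Finset α) = {s₁, s₂, s₃} := by
  rcases p12 with h | h <;> rcases p13 with h' | h' <;> rcases p23 with h'' | h'' <;>
    subst_vars <;> (try simp_all) <;>
    (ext x; simp only [Finset.mem_insert, Finset.mem_singleton]; tauto)

/-- For even `r ≥ 4` the column sets `B₁` of `I_r` and `B₂` of `J_r - I_r`
are bases of the binary matroid of `[I_r | J_r - I_r]`, but there are no 3-element
subsets `X ⊆ B₁`, `Y ⊆ B₂` and bijection `φ : X → Y` such that `(B₁ \ Z) ∪ φ(Z)` is a
basis for every `Z ⊆ X`. -/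
theorem stmt_18 (r : ℕ) (hr : 4 ≤ r) (hre : Even r) :
    spikeIsBasis r (Finset.univ.map ⟨Sum.inl, Sum.inl_injective⟩) ∧
    spikeIsBasis r (Finset.univ.map ⟨Sum.inr, Sum.inr_injective⟩) ∧
    ¬ ∃ (X Y : Finset (Fin r ⊕ Fin r)) (φ : Fin r ⊕ Fin r → Fin r ⊕ Fin r),
        X ⊆ Finset.univ.map ⟨Sum.inl, Sum.inl_injective⟩ ∧
        Y ⊆ Finset.univ.map ⟨Sum.inr, Sum.inr_injective⟩ ∧
        X.card = 3 ∧ Y.card = 3 ∧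
        Set.BijOn φ (X : Set (Fin r ⊕ Fin r)) (Y : Set (Fin r ⊕ Fin r)) ∧
        ∀ Z ⊆ X, spikeIsBasis r
          (((Finset.univ.map ⟨Sum.inl, Sum.inl_injective⟩) \ Z) ∪ Z.image φ) := by
  refine ⟨⟨by simp, li_B1 r⟩, ⟨by simp, li_B2 r hre⟩, ?_⟩
  rintro ⟨X, Y, φ, hX, hY, hXc, hYc, hbij, hswap⟩
  -- fixed-point-free step
  have hfix : ∀ s t : Fin r, Sum.inl s ∈ X → φ (Sum.inl s) = Sum.inr t → t ≠ s := by
    intro s t hsX hst hts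
    subst hts
    have hZ := hswap {Sum.inl t} (by simpa using hsX)
    rw [Finset.image_singleton, hst] at hZ
    exact spike_not_li r _ _ (Finset.Subset.refl _)
      ⟨Sum.inr t, Finset.mem_union_right _ (by simp)⟩ (sum_single r t) hZ.2
  -- pair step
  have hpair : ∀ s s' t t' : Fin r, Sum.inl s ∈ X → Sum.inl s' ∈ X → s ≠ s' →
      φ (Sum.inl s) = Sum.inr t → φ (Sum.inl s') = Sum.inr t' →
      t ≠ s → t' ≠ s' → t ≠ t' → t = s' ∨ t' = s := by
    intro s s' t t' hsX hsX' hss hfs hfs' hts ht's' htt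
    by_contra hcon
    push_neg at hcon
    obtain ⟨hts', ht's⟩ := hcon
    have hZ := hswap {Sum.inl s, Sum.inl s'}
      (by
        intro j hj
        simp only [Finset.mem_insert, Finset.mem_singleton] at hj
        rcases hj with rfl | rfl
        exacts [hsX, hsX'])
    have himg : ({Sum.inl s, Sum.inl s'} : Finset (Fin r ⊕ Fin r)).image φ
        = {Sum.inr t, Sum.inr t'} := by
      rw [Finset.image_insert, Finset.image_singleton, hfs, hfs']
    rw [himg] at hZ
    refine spike_not_li r _ {Sum.inl t, Sum.inl t', Sum.inr t, Sum.inr t'} ?_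
      ⟨Sum.inl t, by simp⟩ (sum_pair r t t' htt) hZ.2
    intro j hj
    simp only [Finset.mem_insert, Finset.mem_singleton] at hj
    rcases hj with rfl | rfl | rfl | rfl
    · exact Finset.mem_union_left _ (Finset.mem_sdiff.mpr ⟨by simp, by simp [hts, hts']⟩)
    · exact Finset.mem_union_left _ (Finset.mem_sdiff.mpr ⟨by simp, by simp [ht's, ht's']⟩)
    · exact Finset.mem_union_right _ (by simp)
    · exact Finset.mem_union_right _ (by simp)
  -- extract the three elements of X
  obtain ⟨a, b, c, hab, hac, hbc, hXeq⟩ := Finset.card_eq_three.mp hXc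
  have ha : a ∈ X := by rw [hXeq]; simp
  have hb : b ∈ X := by rw [hXeq]; simp
  have hc : c ∈ X := by rw [hXeq]; simp
  obtain ⟨s₁, rfl⟩ : ∃ s, a = Sum.inl s := by
    have := hX ha
    simp only [Finset.mem_map, Finset.mem_univ, Function.Embedding.coeFn_mk,
      true_and] at this
    obtain ⟨s, hs⟩ := this
    exact ⟨s, hs.symm⟩
  obtain ⟨s₂, rfl⟩ : ∃ s, b = Sum.inl s := by
    have := hX hb
    simp only [Finset.mem_map, Finset.mem_univ, Function.Embedding.coeFn_mk,
      true_and] at this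
    obtain ⟨s, hs⟩ := this
    exact ⟨s, hs.symm⟩
  obtain ⟨s₃, rfl⟩ : ∃ s, c = Sum.inl s := by
    have := hX hc
    simp only [Finset.mem_map, Finset.mem_univ, Function.Embedding.coeFn_mk,
      true_and] at this
    obtain ⟨s, hs⟩ := this
    exact ⟨s, hs.symm⟩
  have hs12 : s₁ ≠ s₂ := by simpa using hab
  have hs13 : s₁ ≠ s₃ := by simpa using hac
  have hs23 : s₂ ≠ s₃ := by simpa using hbc
  -- images under φ
  obtain ⟨t₁, hφ1⟩ : ∃ t, φ (Sum.inl s₁) = Sum.inr t := by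
    have := hY (Finset.mem_coe.mp (hbij.mapsTo (Finset.mem_coe.mpr ha)))
    simp only [Finset.mem_map, Finset.mem_univ, Function.Embedding.coeFn_mk,
      true_and] at this
    obtain ⟨t, ht⟩ := this
    exact ⟨t, ht.symm⟩
  obtain ⟨t₂, hφ2⟩ : ∃ t, φ (Sum.inl s₂) = Sum.inr t := by
    have := hY (Finset.mem_coe.mp (hbij.mapsTo (Finset.mem_coe.mpr hb)))
    simp only [Finset.mem_map, Finset.mem_univ, Function.Embedding.coeFn_mk,
      true_and] at this
    obtain ⟨t, ht⟩ := this
    exact ⟨t, ht.symm⟩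
  obtain ⟨t₃, hφ3⟩ : ∃ t, φ (Sum.inl s₃) = Sum.inr t := by
    have := hY (Finset.mem_coe.mp (hbij.mapsTo (Finset.mem_coe.mpr hc)))
    simp only [Finset.mem_map, Finset.mem_univ, Function.Embedding.coeFn_mk,
      true_and] at this
    obtain ⟨t, ht⟩ := this
    exact ⟨t, ht.symm⟩
  have ht12 : t₁ ≠ t₂ := by
    intro h
    exact hab (hbij.injOn (Finset.mem_coe.mpr ha) (Finset.mem_coe.mpr hb)
      (by rw [hφ1, hφ2, h]))
  have ht13 : t₁ ≠ t₃ := by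
    intro h
    exact hac (hbij.injOn (Finset.mem_coe.mpr ha) (Finset.mem_coe.mpr hc)
      (by rw [hφ1, hφ3, h]))
  have ht23 : t₂ ≠ t₃ := by
    intro h
    exact hbc (hbij.injOn (Finset.mem_coe.mpr hb) (Finset.mem_coe.mpr hc)
      (by rw [hφ2, hφ3, h]))
  have h1 := hfix s₁ t₁ ha hφ1
  have h2 := hfix s₂ t₂ hb hφ2
  have h3 := hfix s₃ t₃ hc hφ3
  have p12 := hpair s₁ s₂ t₁ t₂ ha hb hs12 hφ1 hφ2 h1 h2 ht12
  have p13 := hpair s₁ s₃ t₁ t₃ ha hc hs13 hφ1 hφ3 h1 h3 ht13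
  have p23 := hpair s₂ s₃ t₂ t₃ hb hc hs23 hφ2 hφ3 h2 h3 ht23
  have teq := cyc s₁ s₂ s₃ t₁ t₂ t₃ hs12 hs13 hs23 ht12 ht13 ht23 h1 h2 h3 p12 p13 p23
  -- the full swap is dependent
  have hZ := hswap X (Finset.Subset.refl X)
  have himg : X.image φ = {Sum.inr t₁, Sum.inr t₂, Sum.inr t₃} := by
    rw [hXeq, Finset.image_insert, Finset.image_insert, Finset.image_singleton,
      hφ1, hφ2, hφ3]
  rw [himg, hXeq] at hZ
  exact spike_not_li r _ _ (Finset.Subset.refl _)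
    ⟨Sum.inr t₁, Finset.mem_union_right _ (by simp)⟩
    (sum_full r s₁ s₂ s₃ t₁ t₂ t₃ hs12 hs13 hs23 ht12 ht13 ht23 teq) hZ.2
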